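/- X₁₄ ∩ A₂ = {((1,0),(ζ^{1+s},0)) : s ∈ [0,1]}; in particular this intersection is an arc joining Δ₁ to Δ₂ and equals A₂ ∩ ({(1,0)} × S³). -/

import Mathlib

open Complex

/-- `zeta t = exp(2πit/7)`. -/
noncomputable def zeta (t : ℝ) : ℂ := Complex.exp ((2 * Real.pi * t / 7 : ℝ) * Complex.I)

/-- The 3-sphere as the unit sphere in `ℂ × ℂ`. -/
def Sph3 : Set (ℂ × ℂ) := {p | ‖p.1‖ ^ 2 + ‖p.2‖ ^ 2 = 1}

/-- The "diagonal" 3-sphere `Δ_k = {((x₁,x₂),(ζᵏx₁,ζ^{2k}x₂))} ⊆ S³ × S³`. -/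
def Delta (k : ℕ) : Set ((ℂ × ℂ) × (ℂ × ℂ)) :=
  {q | ∃ p ∈ Sph3, q = (p, (zeta k * p.1, zeta (2 * k) * p.2))}

/-- `A_k = {((x₁,x₂),(ζˢx₁,ζ^{2s}x₂)) : (x₁,x₂) ∈ S³, s ∈ [k−1,k]} ⊆ S³ × S³`. -/
def A (k : ℕ) : Set ((ℂ × ℂ) × (ℂ × ℂ)) :=
  {q | ∃ p ∈ Sph3, ∃ s : ℝ, (k : ℝ) - 1 ≤ s ∧ s ≤ k ∧
    q = (p, (zeta s * p.1, zeta (2 * s) * p.2))}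

/-- `X₁₄ = {((r,x),(ζ^{4t}r, ζᵗx)) : (r,x) ∈ D₂, t ∈ [0,1]}`, where
`D₂ = {(r,x) ∈ ℝ × ℂ : 0 ≤ r ≤ 1, r² + |x|² = 1} ⊆ S³`. -/
def X14 : Set ((ℂ × ℂ) × (ℂ × ℂ)) :=
  {q | ∃ (r : ℝ) (x : ℂ), 0 ≤ r ∧ r ≤ 1 ∧ r ^ 2 + ‖x‖ ^ 2 = 1 ∧
    ∃ t ∈ Set.Icc (0:ℝ) 1, q = (((r : ℂ), x), (zeta (4 * t) * r, zeta t * x))}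

lemma zeta_abs (t : ℝ) : ‖zeta t‖ = 1 := by
  simp [zeta, Complex.norm_exp]

lemma zeta_ne_zero (t : ℝ) : zeta t ≠ 0 := by
  intro h
  have := zeta_abs t
  simp [h] at this

lemma zeta_inj {a b : ℝ} (h : zeta a = zeta b) (hd : |a - b| < 7) : a = b := by
  unfold zeta at h
  rw [Complex.exp_eq_exp_iff_exists_int] at h
  obtain ⟨n, hn⟩ := h
  have h1 : (2*Real.pi*a/7 : ℝ) = 2*Real.pi*b/7 + n*(2*Real.pi) := by
    have := congrArg Complex.im hn
    simpa using this
  have hπ := Real.pi_pos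
  have hab : a - b = 7 * n := by
    field_simp at h1
    nlinarith
  rw [hab] at hd
  have habs : |(n:ℝ)| < 1 := by
    rw [abs_mul] at hd
    simp at hd
    nlinarith [abs_nonneg (n:ℝ)]
  have hn0 : n = 0 := by
    have h2 : |n| < 1 := by exact_mod_cast (by rw [← Int.cast_abs] at habs; exact_mod_cast habs : ((|n| : ℤ) : ℝ) < 1)
    exact Int.abs_lt_one_iff.mp h2
  simp [hn0] at hab
  linarith

lemma arc_mem_A2 {s : ℝ} (hs0 : 0 ≤ s) (hs1 : s ≤ 1) :
    (((1 : ℂ), (0 : ℂ)), (zeta (1 + s), (0 : ℂ))) ∈ A 2 := by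
  refine ⟨((1:ℂ), (0:ℂ)), by simp [Sph3], 1 + s, by push_cast; linarith, by push_cast; linarith, ?_⟩
  simp

lemma key : X14 ∩ A 2 = {q | ∃ s ∈ Set.Icc (0:ℝ) 1,
      q = (((1 : ℂ), (0 : ℂ)), (zeta (1 + s), (0 : ℂ)))} := by
  ext q
  constructor
  · rintro ⟨⟨r, x, hr0, hr1, hrx, t, ⟨ht0, ht1⟩, rfl⟩, p, hp, s, hs1, hs2, heq⟩
    push_cast at hs1 hs2
    have hp' : p = ((r:ℂ), x) := (Prod.mk.injEq _ _ _ _ ▸ heq).1.symm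
    subst hp'
    have heq2 := (Prod.mk.injEq _ _ _ _ ▸ heq).2
    have h1 : zeta (4*t) * r = zeta s * r := (Prod.mk.injEq _ _ _ _ ▸ heq2).1
    have h2 : zeta t * x = zeta (2*s) * x := (Prod.mk.injEq _ _ _ _ ▸ heq2).2
    have hx0 : x = 0 := by
      by_contra hx
      have : zeta t = zeta (2*s) := mul_right_cancel₀ hx h2
      have ht2s : t = 2*s := zeta_inj this (by rw [abs_lt]; constructor <;> linarith)
      linarith
    subst hx0
    have hr : r = 1 := by
      have : r^2 = 1 := by simpa using hrx
      nlinarith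
    subst hr
    have hz : zeta (4*t) = zeta s := by
      have : (1:ℂ) ≠ 0 := one_ne_zero
      simpa using h1
    have h4t : 4*t = s := zeta_inj hz (by rw [abs_lt]; constructor <;> linarith)
    refine ⟨s - 1, ⟨by linarith, by linarith⟩, ?_⟩
    have : (1:ℝ) + (s - 1) = s := by ring
    rw [this]
    push_cast
    simp [hz]
  · rintro ⟨s, ⟨hs0, hs1⟩, rfl⟩
    refine ⟨⟨1, 0, zero_le_one, le_refl 1, by simp, (1+s)/4, ⟨by linarith, by linarith⟩, ?_⟩,
      arc_mem_A2 hs0 hs1⟩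
    have : 4 * ((1+s)/4) = 1 + s := by ring
    rw [this]
    push_cast
    simp

/-- `X₁₄ ∩ A₂ = {((1,0),(ζ^{1+s},0)) : s ∈ [0,1]}`; in particular this intersection is
an arc joining `Δ₁` to `Δ₂` and equals `A₂ ∩ ({(1,0)} × S³)`. -/
theorem stmt_15 :
    X14 ∩ A 2 = {q | ∃ s ∈ Set.Icc (0:ℝ) 1,
        q = (((1 : ℂ), (0 : ℂ)), (zeta (1 + s), (0 : ℂ)))} ∧
    X14 ∩ A 2 = A 2 ∩ {q | q.1 = ((1 : ℂ), (0 : ℂ)) ∧ q.2 ∈ Sph3} ∧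
    (((1 : ℂ), (0 : ℂ)), (zeta 1, (0 : ℂ))) ∈ Delta 1 ∧
    (((1 : ℂ), (0 : ℂ)), (zeta 2, (0 : ℂ))) ∈ Delta 2 := by
  refine ⟨key, ?_, ?_, ?_⟩
  · rw [key]
    ext q
    constructor
    · rintro ⟨s, ⟨hs0, hs1⟩, rfl⟩
      exact ⟨arc_mem_A2 hs0 hs1, rfl, by simp [Sph3, zeta_abs]⟩
    · rintro ⟨⟨p, hp, s, hs1, hs2, rfl⟩, h1, h2⟩
      push_cast at hs1 hs2
      simp only at h1
      subst h1
      refine ⟨s - 1, ⟨by linarith, by linarith⟩, ?_⟩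
      have : (1:ℝ) + (s - 1) = s := by ring
      rw [this]
      simp
  · exact ⟨((1:ℂ), (0:ℂ)), by simp [Sph3], by norm_num⟩
  · refine ⟨((1:ℂ), (0:ℂ)), by simp [Sph3], ?_⟩
    push_cast
    norm_num
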